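/- (Kronecker's theorem) If λ_1, …, λ_n are real numbers that are linearly independent over ℚ, then for any real numbers κ_1, …, κ_n and any ε > 0 there exists t ∈ ℝ such that the distance from λ_j t - κ_j to 2πℤ is less than ε for every j = 1, …, n. -/

import Mathlib

open Complex Filter Finset intervalIntegral
open scoped Real

noncomputable section

/-- Mean of `exp(i μ t)` over `[0,T]` tends to 0 when `μ ≠ 0`. -/
lemma mean_exp_zero {μ : ℝ} (hμ : μ ≠ 0) :
    Tendsto (fun T : ℝ => (1/T : ℂ) * ∫ t in (0:ℝ)..T, Complex.exp (((μ:ℂ) * Complex.I) * t))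
      atTop (nhds 0) := by
  have hc : (μ : ℂ) * Complex.I ≠ 0 := by
    simp [Complex.ext_iff, hμ]
  have key : ∀ T : ℝ, (∫ t in (0:ℝ)..T, Complex.exp (((μ:ℂ) * Complex.I) * t))
      = (Complex.exp ((μ:ℂ) * Complex.I * T) - 1) / ((μ:ℂ) * Complex.I) := by
    intro T
    simpa using integral_exp_mul_complex (a := 0) (b := T) hc
  apply squeeze_zero_norm' (a := fun T : ℝ => (2 / |μ|) / T)
  · filter_upwards [eventually_gt_atTop (0:ℝ)] with T hT
    rw [key T]
    have h1 : ‖Complex.exp ((μ:ℂ) * Complex.I * T) - 1‖ ≤ 2 := by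
      calc ‖Complex.exp ((μ:ℂ) * Complex.I * T) - 1‖
          ≤ ‖Complex.exp ((μ:ℂ) * Complex.I * T)‖ + ‖(1:ℂ)‖ := norm_sub_le _ _
        _ ≤ 2 := by
            have : (μ:ℂ) * Complex.I * T = ((μ * T : ℝ) : ℂ) * Complex.I := by
              push_cast; ring
            rw [this, Complex.norm_exp_ofReal_mul_I]
            norm_num
    have h2 : ‖(μ:ℂ) * Complex.I‖ = |μ| := by
      rw [norm_mul, Complex.norm_I, Complex.norm_real, Real.norm_eq_abs, mul_one]
    have hμ' : (0:ℝ) < |μ| := abs_pos.mpr hμ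
    have e1 : ‖(1/T : ℂ) * ((Complex.exp ((μ:ℂ) * Complex.I * ↑T) - 1) / ((μ:ℂ) * Complex.I))‖
        = 1/T * (‖Complex.exp ((μ:ℂ) * Complex.I * ↑T) - 1‖ / |μ|) := by
      rw [norm_mul, norm_div, norm_div, h2, norm_one, Complex.norm_real, Real.norm_eq_abs,
        abs_of_pos hT]
    rw [e1]
    calc 1/T * (‖Complex.exp ((μ:ℂ) * Complex.I * ↑T) - 1‖ / |μ|)
        ≤ 1/T * (2 / |μ|) := by gcongr
      _ = 2 / |μ| / T := by ring
  · have : Tendsto (fun T : ℝ => (2 / |μ|) * T⁻¹) atTop (nhds ((2/|μ|) * 0)) :=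
      Tendsto.const_mul _ tendsto_inv_atTop_zero
    simpa [div_eq_mul_inv] using this

lemma mean_term {μ c : ℝ} (h : μ = 0 → c = 0) :
    Tendsto (fun T : ℝ => (1/T : ℂ) * ∫ t in (0:ℝ)..T, Complex.exp ((↑(μ * t - c)) * Complex.I))
      atTop (nhds (if μ = 0 then (1:ℂ) else 0)) := by
  rcases eq_or_ne μ 0 with hμ | hμ
  · have hc : c = 0 := h hμ
    subst hμ; subst hc
    simp only [if_pos rfl]
    apply Tendsto.congr' _ (tendsto_const_nhds (x := (1:ℂ)))
    filter_upwards [eventually_gt_atTop (0:ℝ)] with T hT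
    have : ∀ t : ℝ, Complex.exp ((↑((0:ℝ) * t - 0)) * Complex.I) = 1 := by
      intro t; norm_num
    rw [intervalIntegral.integral_congr (g := fun _ => (1:ℂ)) (fun t _ => this t)]
    rw [intervalIntegral.integral_const]
    rw [sub_zero, Complex.real_smul, mul_one, one_div, inv_mul_cancel₀]
    exact_mod_cast ne_of_gt hT
  · rw [if_neg hμ]
    have key : ∀ T : ℝ, (∫ t in (0:ℝ)..T, Complex.exp ((↑(μ * t - c)) * Complex.I))
        = Complex.exp ((↑(-c)) * Complex.I) * ∫ t in (0:ℝ)..T, Complex.exp (((μ:ℂ) * Complex.I) * t) := by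
      intro T
      rw [← intervalIntegral.integral_const_mul]
      apply intervalIntegral.integral_congr
      intro t _
      show Complex.exp _ = Complex.exp _ * Complex.exp _
      rw [← Complex.exp_add]
      congr 1
      push_cast
      ring
    have := (mean_exp_zero hμ).const_mul (Complex.exp ((↑(-c)) * Complex.I))
    rw [mul_zero] at this
    apply this.congr
    intro T
    rw [key T]; ring

lemma cont_term (μ c : ℝ) : Continuous fun t : ℝ => Complex.exp ((↑(μ * t - c)) * Complex.I) := by
  fun_prop

lemma mean_sum {P : Type*} [Fintype P] (μ c : P → ℝ) (h : ∀ p, μ p = 0 → c p = 0) :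
    Tendsto (fun T : ℝ => (1/T : ℂ) *
        ∫ t in (0:ℝ)..T, ∑ p : P, Complex.exp ((↑(μ p * t - c p)) * Complex.I))
      atTop (nhds (∑ p : P, if μ p = 0 then (1:ℂ) else 0)) := by
  have key : ∀ T : ℝ, (1/T : ℂ) *
      (∫ t in (0:ℝ)..T, ∑ p : P, Complex.exp ((↑(μ p * t - c p)) * Complex.I))
      = ∑ p : P, (1/T : ℂ) * ∫ t in (0:ℝ)..T, Complex.exp ((↑(μ p * t - c p)) * Complex.I) := by
    intro T
    rw [intervalIntegral.integral_finset_sum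
      (fun p _ => (cont_term (μ p) (c p)).intervalIntegrable _ _), Finset.mul_sum]
  exact Tendsto.congr (fun T => (key T).symm)
    (tendsto_finset_sum _ (fun p _ => mean_term (h p)))

section Expand

variable {N k : ℕ}

/-- `S v m = ∑ i, v (m i)`. -/
def Sm (v : Fin N → ℝ) (m : Fin k → Fin N) : ℝ := ∑ i, v (m i)

lemma pow_expand (L K : Fin N → ℝ) (t : ℝ) :
    (∑ j : Fin N, Complex.exp ((↑(L j * t - K j)) * Complex.I)) ^ k
      = ∑ m : Fin k → Fin N, Complex.exp ((↑(Sm L m * t - Sm K m)) * Complex.I) := by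
  have h1 : (∑ j : Fin N, Complex.exp ((↑(L j * t - K j)) * Complex.I)) ^ k
      = ∏ _i : Fin k, ∑ j : Fin N, Complex.exp ((↑(L j * t - K j)) * Complex.I) := by
    rw [Finset.prod_const, Finset.card_univ, Fintype.card_fin]
  rw [h1, Finset.prod_univ_sum]
  rw [Fintype.piFinset_univ]
  apply Finset.sum_congr rfl
  intro m _
  rw [← Complex.exp_sum]
  congr 1
  rw [← Finset.sum_mul]
  congr 1
  norm_cast
  simp only [Sm, Finset.sum_sub_distrib, Finset.sum_mul]

lemma conj_sum_exp (L K : Fin N → ℝ) (t : ℝ) :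
    (starRingEnd ℂ) (∑ j : Fin N, Complex.exp ((↑(L j * t - K j)) * Complex.I))
      = ∑ j : Fin N, Complex.exp ((↑((-L) j * t - (-K) j)) * Complex.I) := by
  rw [map_sum]
  apply Finset.sum_congr rfl
  intro j _
  rw [← Complex.exp_conj]
  congr 1
  rw [map_mul, Complex.conj_I, Complex.conj_ofReal]
  simp only [Pi.neg_apply]
  push_cast
  ring

lemma normSq_pow_expand (L K : Fin N → ℝ) (t : ℝ) :
    ((Complex.normSq (∑ j : Fin N, Complex.exp ((↑(L j * t - K j)) * Complex.I)) : ℝ) : ℂ) ^ k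
      = ∑ p : (Fin k → Fin N) × (Fin k → Fin N),
          Complex.exp ((↑((Sm L p.1 - Sm L p.2) * t - (Sm K p.1 - Sm K p.2))) * Complex.I) := by
  set F := ∑ j : Fin N, Complex.exp ((↑(L j * t - K j)) * Complex.I) with hF
  have h0 : ((Complex.normSq F : ℝ) : ℂ) = F * (starRingEnd ℂ) F := (Complex.mul_conj F).symm
  rw [h0, mul_pow, pow_expand L K t, conj_sum_exp L K t, pow_expand (-L) (-K) t]
  rw [Finset.sum_mul_sum]
  rw [← Finset.sum_product']
  apply Finset.sum_congr rfl
  intro p _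
  rw [← Complex.exp_add]
  congr 1
  have hSL : Sm (-L) p.2 = -Sm L p.2 := by simp [Sm]
  have hSK : Sm (-K) p.2 = -Sm K p.2 := by simp [Sm]
  rw [hSL, hSK]
  push_cast
  ring

end Expand

lemma count_bound {A B : Type*} [Fintype A] [Fintype B] [DecidableEq B] (f : A → B) :
    (Fintype.card A : ℝ)^2
      ≤ (Fintype.card B : ℝ) * ∑ a : A, ∑ a' : A, (if f a = f a' then (1:ℝ) else 0) := by
  classical
  set Nb : B → ℝ := fun b => ((Finset.univ.filter (fun a : A => f a = b)).card : ℝ) with hNb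
  have step1 : ∑ a : A, ∑ a' : A, (if f a = f a' then (1:ℝ) else 0) = ∑ b : B, Nb b ^ 2 := by
    have inner : ∀ a : A, ∑ a' : A, (if f a = f a' then (1:ℝ) else 0) = Nb (f a) := by
      intro a
      rw [Finset.sum_boole]
      congr 2
      apply Finset.filter_congr
      intro a' _
      exact eq_comm
    rw [Finset.sum_congr rfl (fun a _ => inner a)]
    rw [← Finset.sum_fiberwise' Finset.univ f Nb]
    apply Finset.sum_congr rfl
    intro b _
    rw [Finset.sum_const, nsmul_eq_mul, sq]
  have step2 : (Fintype.card A : ℝ) = ∑ b : B, Nb b := by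
    have h := Finset.card_eq_sum_card_fiberwise (s := (Finset.univ : Finset A))
      (t := (Finset.univ : Finset B)) (f := f) (fun a _ => Finset.mem_univ _)
    rw [Fintype.card, h]
    push_cast
    rfl
  rw [step1, step2]
  have := sq_sum_le_card_mul_sum_sq (s := (Finset.univ : Finset B)) (f := Nb)
  simpa [Finset.card_univ] using this

section Counts

variable {N k : ℕ}

def cnt (m : Fin k → Fin N) (j : Fin N) : ℕ := (Finset.univ.filter (fun i => m i = j)).card

lemma Sm_eq_cnt (v : Fin N → ℝ) (m : Fin k → Fin N) :
    Sm v m = ∑ j, (cnt m j : ℝ) * v j := by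
  rw [Sm, ← Finset.sum_fiberwise' Finset.univ m (fun j => v j)]
  apply Finset.sum_congr rfl
  intro j _
  rw [Finset.sum_const, nsmul_eq_mul, cnt]

lemma cnt_total (m : Fin k → Fin N) : ∑ j, cnt m j = k := by
  have h := Finset.card_eq_sum_card_fiberwise (s := (Finset.univ : Finset (Fin k)))
    (t := (Finset.univ : Finset (Fin N))) (f := m) (fun a _ => Finset.mem_univ _)
  simpa [cnt] using h.symm

lemma cnt_le (m : Fin k → Fin N) (j : Fin N) : cnt m j ≤ k := by
  calc cnt m j ≤ (Finset.univ : Finset (Fin k)).card := Finset.card_filter_le _ _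
    _ = k := by simp

end Counts

lemma near_int {θ δ : ℝ} (hδ0 : 0 ≤ δ) (h : 1 - 2*δ ≤ Real.cos θ) :
    ∃ kk : ℤ, (θ - 2*Real.pi*kk)^2 ≤ Real.pi^2 * δ := by
  refine ⟨round (θ / (2*Real.pi)), ?_⟩
  set r : ℤ := round (θ / (2*Real.pi)) with hr
  set φ : ℝ := θ - 2*Real.pi*r with hφ
  have h2π : (0:ℝ) < 2*Real.pi := by positivity
  have hφπ : |φ| ≤ Real.pi := by
    have h1 : |θ/(2*Real.pi) - r| ≤ 1/2 := abs_sub_round _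
    have h2 : φ = (θ/(2*Real.pi) - r) * (2*Real.pi) := by
      field_simp
      exact hφ
    rw [h2, abs_mul, abs_of_pos h2π]
    calc |θ/(2*Real.pi) - r| * (2*Real.pi) ≤ (1/2) * (2*Real.pi) := by gcongr
      _ = Real.pi := by ring
  have hcos : Real.cos φ = Real.cos θ := by
    have : φ = θ - r * (2*Real.pi) := by rw [hφ]; ring
    rw [this, Real.cos_sub_int_mul_two_pi]
  have hub : Real.cos φ ≤ 1 - 2/Real.pi^2 * φ^2 := Real.cos_le_one_sub_mul_cos_sq hφπ
  have hπ2 : (0:ℝ) < Real.pi^2 := by positivity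
  have key : 2/Real.pi^2 * φ^2 ≤ 2*δ := by rw [hcos] at hub; linarith
  have := mul_le_mul_of_nonneg_right key (le_of_lt (by positivity : (0:ℝ) < Real.pi^2/2))
  calc φ^2 = 2/Real.pi^2 * φ^2 * (Real.pi^2/2) := by field_simp
    _ ≤ 2*δ * (Real.pi^2/2) := this
    _ = Real.pi^2 * δ := by ring

lemma norm_one_add_exp (θ : ℝ) :
    ‖1 + Complex.exp ((θ:ℂ) * Complex.I)‖ ^ 2 = 2 + 2*Real.cos θ := by
  rw [Complex.sq_norm, Complex.exp_mul_I, ← Complex.ofReal_cos, ← Complex.ofReal_sin]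
  rw [Complex.normSq_apply]
  simp only [Complex.add_re, Complex.add_im, Complex.one_re, Complex.one_im, Complex.mul_re,
    Complex.mul_im, Complex.ofReal_re, Complex.ofReal_im, Complex.I_re, Complex.I_im]
  ring_nf
  nlinarith [Real.sin_sq_add_cos_sq θ]

lemma exists_k {N : ℕ} (hN : 2 ≤ N) {b : ℝ} (hb : 1 ≤ b) (hbN : b < N) :
    ∃ k : ℕ, 1 ≤ k ∧ ((k:ℝ)+1)^N * (b^(2*k) + 1) ≤ (N:ℝ)^(2*k) := by
  have hN0 : (0:ℝ) < N := by positivity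
  set r : ℝ := (b/N)^2 with hr
  have hr0 : 0 < r := by positivity
  have hr1 : r < 1 := by
    rw [hr]
    have h1 : b/(N:ℝ) < 1 := (div_lt_one hN0).mpr hbN
    have h2 : 0 < b/(N:ℝ) := by positivity
    nlinarith
  have h1 : Tendsto (fun k : ℕ => ((k:ℝ))^N * r^k) atTop (nhds 0) :=
    tendsto_pow_const_mul_const_pow_of_lt_one N hr0.le hr1
  have h2 : Tendsto (fun k : ℕ => ((k+1:ℕ):ℝ)^N * r^(k+1)) atTop (nhds 0) :=
    h1.comp (tendsto_add_atTop_nat 1)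
  have h3 : Tendsto (fun k : ℕ => ((k:ℝ)+1)^N * r^k) atTop (nhds 0) := by
    have h4 := h2.const_mul r⁻¹
    rw [mul_zero] at h4
    apply h4.congr
    intro k
    push_cast
    rw [pow_succ]
    field_simp
  have hev : ∀ᶠ k : ℕ in atTop, ((k:ℝ)+1)^N * r^k < 1/2 := h3.eventually (gt_mem_nhds (by norm_num))
  obtain ⟨k, hk2, hk1⟩ := ((eventually_ge_atTop 1).and hev).exists
  refine ⟨k, hk2, ?_⟩
  have hb2k : (1:ℝ) ≤ b^(2*k) := one_le_pow₀ hb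
  have hkey : r^k * (N:ℝ)^(2*k) = b^(2*k) := by
    rw [hr, ← pow_mul, div_pow, div_mul_cancel₀]
    positivity
  calc ((k:ℝ)+1)^N * (b^(2*k) + 1) ≤ ((k:ℝ)+1)^N * (2 * b^(2*k)) := by
        have : (0:ℝ) ≤ ((k:ℝ)+1)^N := by positivity
        nlinarith
    _ = 2 * (((k:ℝ)+1)^N * r^k) * (N:ℝ)^(2*k) := by rw [← hkey]; ring
    _ ≤ 2 * (1/2) * (N:ℝ)^(2*k) := by
        have hNk : (0:ℝ) ≤ (N:ℝ)^(2*k) := by positivity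
        have h5 : (0:ℝ) ≤ ((k:ℝ)+1)^N * r^k := by positivity
        nlinarith
    _ = (N:ℝ)^(2*k) := by ring

lemma exists_ge_of_mean {G : ℝ → ℝ} (hG : Continuous G) {T c : ℝ} (hT : 0 < T)
    (h : c < (1/T) * ∫ t in (0:ℝ)..T, G t) : ∃ t, c ≤ G t := by
  by_contra hc
  push_neg at hc
  have hle : (∫ t in (0:ℝ)..T, G t) ≤ ∫ _t in (0:ℝ)..T, c :=
    intervalIntegral.integral_mono_on hT.le (hG.intervalIntegrable _ _)
      intervalIntegrable_const (fun t _ => (hc t).le)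
  rw [intervalIntegral.integral_const, smul_eq_mul, sub_zero] at hle
  have h2 : (1/T) * ∫ t in (0:ℝ)..T, G t ≤ (1/T) * (T * c) :=
    mul_le_mul_of_nonneg_left hle (by positivity)
  have h3 : (1/T) * (T * c) = c := by field_simp
  linarith



set_option maxHeartbeats 2000000 in
/-- Kronecker's theorem: if λ_1, …, λ_n are rationally independent, then for any
κ_1, …, κ_n and ε > 0 there is t ∈ ℝ with dist(λ_j t - κ_j, 2πℤ) < ε for every j. -/
theorem kronecker (n : ℕ) (lam : Fin n → ℝ) (hlam : LinearIndependent ℚ lam)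
    (κ : Fin n → ℝ) (ε : ℝ) (hε : 0 < ε) :
    ∃ t : ℝ, ∀ j, ∃ k : ℤ, |lam j * t - κ j - 2 * Real.pi * k| < ε := by
  classical
  rcases Nat.eq_zero_or_pos n with rfl | hn
  · exact ⟨0, fun j => j.elim0⟩
  have hπ := Real.pi_pos
  set N : ℕ := n + 1 with hNdef
  have hN2 : 2 ≤ N := by omega
  have hN2' : (2:ℝ) ≤ (N:ℝ) := by exact_mod_cast hN2
  set L : Fin N → ℝ := Fin.cons 0 lam with hL
  set K : Fin N → ℝ := Fin.cons 0 κ with hK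
  set δ : ℝ := min 1 (ε^2/(2*Real.pi^2)) with hδ
  have hδ0 : 0 < δ := lt_min one_pos (by positivity)
  have hδ1 : δ ≤ 1 := min_le_left _ _
  have hδε : δ ≤ ε^2/(2*Real.pi^2) := min_le_right _ _
  set b : ℝ := (N:ℝ) - δ with hb
  have hb1 : (1:ℝ) ≤ b := by rw [hb]; linarith
  have hbN : b < (N:ℝ) := by rw [hb]; linarith
  obtain ⟨k, hk1, hk⟩ := exists_k hN2 hb1 hbN
  -- frequencies and phases
  set μf : (Fin k → Fin N) × (Fin k → Fin N) → ℝ := fun p => Sm L p.1 - Sm L p.2 with hμf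
  set cf : (Fin k → Fin N) × (Fin k → Fin N) → ℝ := fun p => Sm K p.1 - Sm K p.2 with hcf
  have hcnt_iff : ∀ p : (Fin k → Fin N) × (Fin k → Fin N), μf p = 0 ↔ cnt p.1 = cnt p.2 := by
    intro p
    constructor
    · intro h
      have hsum : ∑ j : Fin N, ((cnt p.1 j : ℝ) - (cnt p.2 j : ℝ)) * L j = 0 := by
        have := sub_eq_zero.mpr (sub_eq_zero.mp (by simpa [hμf, Sm_eq_cnt] using h))
        rw [← Finset.sum_sub_distrib] at *
        · simpa [sub_mul] using sub_eq_zero.mpr this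
      -- reduce to Fin n sum
      have hsum2 : ∑ j : Fin n, ((cnt p.1 j.succ : ℝ) - (cnt p.2 j.succ : ℝ)) * lam j = 0 := by
        rw [Fin.sum_univ_succ] at hsum
        simpa [hL] using hsum
      have hli := Fintype.linearIndependent_iff.mp hlam
        (fun j => ((cnt p.1 j.succ : ℚ) - (cnt p.2 j.succ : ℚ)))
      have hzero : ∀ j : Fin n, ((cnt p.1 j.succ : ℚ) - (cnt p.2 j.succ : ℚ)) = 0 := by
        apply hli
        rw [← hsum2]
        apply Finset.sum_congr rfl
        intro j _
        rw [Rat.smul_def]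
        push_cast
        ring
      have hsucc : ∀ j : Fin n, cnt p.1 j.succ = cnt p.2 j.succ := by
        intro j
        have := sub_eq_zero.mp (hzero j)
        exact_mod_cast this
      have hzero0 : cnt p.1 0 = cnt p.2 0 := by
        have h1 := cnt_total p.1
        have h2 := cnt_total p.2
        rw [Fin.sum_univ_succ] at h1 h2
        have : ∑ j : Fin n, cnt p.1 j.succ = ∑ j : Fin n, cnt p.2 j.succ :=
          Finset.sum_congr rfl (fun j _ => hsucc j)
        omega
      funext j
      refine Fin.cases hzero0 hsucc j
    · intro h
      rw [hμf]
      simp only [Sm_eq_cnt, h, sub_self]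
  have hzero : ∀ p : (Fin k → Fin N) × (Fin k → Fin N), μf p = 0 → cf p = 0 := by
    intro p h
    have hc := (hcnt_iff p).mp h
    rw [hcf]
    simp only [Sm_eq_cnt, hc, sub_self]
  -- lower bound for M
  set M : ℝ := ∑ p : (Fin k → Fin N) × (Fin k → Fin N), (if μf p = 0 then (1:ℝ) else 0) with hM
  have hM1 : (((N:ℝ))^k)^2 ≤ ((k:ℝ)+1)^N * M := by
    set fB : (Fin k → Fin N) → (Fin N → Fin (k+1)) :=
      fun m j => ⟨cnt m j, Nat.lt_succ_of_le (cnt_le m j)⟩ with hfB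
    have hiff : ∀ m m' : Fin k → Fin N, fB m = fB m' ↔ cnt m = cnt m' := by
      intro m m'
      constructor
      · intro h
        funext j
        have := congrFun h j
        simpa [hfB, Fin.ext_iff] using this
      · intro h
        funext j
        simp [hfB, Fin.ext_iff, congrFun h j]
    have hcb := count_bound fB
    rw [Fintype.card_fun, Fintype.card_fun] at hcb
    simp only [Fintype.card_fin] at hcb
    calc (((N:ℝ))^k)^2 ≤ ((k:ℝ)+1)^N * ∑ m : Fin k → Fin N, ∑ m' : Fin k → Fin N,
          (if fB m = fB m' then (1:ℝ) else 0) := by exact_mod_cast hcb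
      _ = ((k:ℝ)+1)^N * M := by
          congr 1
          rw [hM, ← Finset.sum_product']
          apply Finset.sum_congr rfl
          intro p _
          congr 1
          rw [eq_iff_iff]
          rw [hiff p.1 p.2, ← hcnt_iff p]
  have hMlb : b^(2*k) + 1 ≤ M := by
    have hkpos : (0:ℝ) < ((k:ℝ)+1)^N := by positivity
    have h1 : ((N:ℝ))^(2*k) = (((N:ℝ))^k)^2 := by rw [← pow_mul, mul_comm]
    have h2 : ((k:ℝ)+1)^N * (b^(2*k) + 1) ≤ ((k:ℝ)+1)^N * M := by
      calc ((k:ℝ)+1)^N * (b^(2*k) + 1) ≤ ((N:ℝ))^(2*k) := hk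
        _ = (((N:ℝ))^k)^2 := h1
        _ ≤ ((k:ℝ)+1)^N * M := hM1
    exact le_of_mul_le_mul_left h2 hkpos
  -- the trigonometric polynomial and its mean
  set Ff : ℝ → ℂ := fun t => ∑ j : Fin N, Complex.exp ((↑(L j * t - K j)) * Complex.I) with hFf
  set G : ℝ → ℝ := fun t => (Complex.normSq (Ff t))^k with hG
  have hGcont : Continuous G := by
    apply Continuous.pow
    apply Complex.continuous_normSq.comp
    exact continuous_finset_sum _ (fun j _ => cont_term (L j) (K j))
  have hmean : Tendsto (fun T : ℝ => (1/T) * ∫ t in (0:ℝ)..T, G t) atTop (nhds M) := by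
    have h1 := mean_sum μf cf hzero
    have h2 : ∀ T : ℝ, (((1/T) * ∫ t in (0:ℝ)..T, G t : ℝ) : ℂ)
        = (1/T : ℂ) * ∫ t in (0:ℝ)..T,
            ∑ p : (Fin k → Fin N) × (Fin k → Fin N),
              Complex.exp ((↑(μf p * t - cf p)) * Complex.I) := by
      intro T
      rw [Complex.ofReal_mul]
      congr 1
      · push_cast; ring
      · rw [← intervalIntegral.integral_ofReal]
        apply intervalIntegral.integral_congr
        intro t _
        show ((G t : ℝ) : ℂ) = _
        rw [hG]
        push_cast
        rw [normSq_pow_expand L K t]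
        apply Finset.sum_congr rfl
        intro p _
        congr 2
        simp only [hμf, hcf]
        push_cast
        ring
    have h3 : Tendsto (fun T : ℝ => (((1/T) * ∫ t in (0:ℝ)..T, G t : ℝ) : ℂ)) atTop
        (nhds (∑ p : (Fin k → Fin N) × (Fin k → Fin N), if μf p = 0 then (1:ℂ) else 0)) := by
      apply h1.congr
      intro T
      exact (h2 T).symm
    have h4 : (∑ p : (Fin k → Fin N) × (Fin k → Fin N), if μf p = 0 then (1:ℂ) else 0)
        = ((M:ℝ):ℂ) := by
      rw [hM]
      push_cast
      apply Finset.sum_congr rfl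
      intro p _
      split <;> simp
    rw [h4] at h3
    have h5 : Tendsto (fun T : ℝ => (((1/T) * ∫ t in (0:ℝ)..T, G t : ℝ) : ℂ).re) atTop
        (nhds (((M:ℝ):ℂ)).re) := (Complex.continuous_re.tendsto _).comp h3
    simpa only [Complex.ofReal_re] using h5
  have hlt : b^(2*k) < M := by linarith
  obtain ⟨T, hAT, hT0⟩ := ((hmean.eventually (lt_mem_nhds hlt)).and (eventually_gt_atTop 0)).exists
  obtain ⟨t, ht⟩ := exists_ge_of_mean hGcont hT0 hAT
  refine ⟨t, fun j => ?_⟩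
  set θ : ℝ := lam j * t - κ j with hθ
  have hnormF : b ≤ ‖Ff t‖ := by
    have h1 : ‖Ff t‖ ^ (2*k) = G t := by
      simp only [hG]
      rw [pow_mul, Complex.sq_norm]
    have h2 : b^(2*k) ≤ ‖Ff t‖^(2*k) := by rw [h1]; exact ht
    exact le_of_pow_le_pow_left₀ (by omega) (norm_nonneg _) h2
  have hmem : (j.succ : Fin N) ∈ (Finset.univ.erase (0 : Fin N)) :=
    Finset.mem_erase.mpr ⟨Fin.succ_ne_zero j, Finset.mem_univ _⟩
  have hE0 : Complex.exp ((↑(L 0 * t - K 0)) * Complex.I) = 1 := by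
    simp [hL, hK]
  have hEj : Complex.exp ((↑(L j.succ * t - K j.succ)) * Complex.I)
      = Complex.exp ((θ:ℂ) * Complex.I) := by
    simp [hL, hK, hθ]
  have hsplit : Ff t = (1 + Complex.exp ((θ:ℂ) * Complex.I))
      + ∑ j' ∈ (Finset.univ.erase (0:Fin N)).erase j.succ,
          Complex.exp ((↑(L j' * t - K j')) * Complex.I) := by
    simp only [hFf]
    rw [← Finset.add_sum_erase _ _ (Finset.mem_univ (0:Fin N)),
        ← Finset.add_sum_erase _ _ hmem, ← add_assoc, hE0, hEj]
  have hcard : (((Finset.univ.erase (0:Fin N)).erase j.succ).card : ℝ) = (n:ℝ) - 1 := by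
    rw [Finset.card_erase_of_mem hmem, Finset.card_erase_of_mem (Finset.mem_univ _),
      Finset.card_univ, Fintype.card_fin]
    have he : N - 1 - 1 = n - 1 := by omega
    rw [he, Nat.cast_sub hn]
    norm_num
  have htri : ‖Ff t‖
      ≤ ‖1 + Complex.exp ((θ:ℂ)*Complex.I)‖ + ((n:ℝ) - 1) := by
    rw [hsplit]
    refine (norm_add_le _ _).trans ?_
    gcongr
    rw [← hcard]
    refine (norm_sum_le _ _).trans ?_
    have hone : ∀ i ∈ (Finset.univ.erase (0:Fin N)).erase j.succ,
        ‖Complex.exp ((↑(L i * t - K i)) * Complex.I)‖ = 1 := fun i _ =>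
      Complex.norm_exp_ofReal_mul_I _
    rw [Finset.sum_congr rfl hone, Finset.sum_const, nsmul_eq_mul, mul_one]
  have h2δ : 2 - δ ≤ ‖1 + Complex.exp ((θ:ℂ)*Complex.I)‖ := by
    have hNn : (N:ℝ) = (n:ℝ) + 1 := by rw [hNdef]; push_cast; ring
    have hbn : b = (n:ℝ) + 1 - δ := by rw [hb, hNn]
    linarith
  have hcosθ : 1 - 2*δ ≤ Real.cos θ := by
    have hsq := norm_one_add_exp θ
    have h0 : (0:ℝ) ≤ 2 - δ := by linarith
    have hp := pow_le_pow_left₀ h0 h2δ 2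
    rw [hsq] at hp
    nlinarith
  obtain ⟨kk, hkk⟩ := near_int hδ0.le hcosθ
  refine ⟨kk, ?_⟩
  have hsmall : (θ - 2*Real.pi*kk)^2 < ε^2 := by
    have hπδ : Real.pi^2 * δ ≤ ε^2/2 := by
      calc Real.pi^2 * δ ≤ Real.pi^2 * (ε^2/(2*Real.pi^2)) := by
            apply mul_le_mul_of_nonneg_left hδε (by positivity)
        _ = ε^2/2 := by field_simp
    nlinarith
  exact abs_lt_of_sq_lt_sq hsmall hε.le
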